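/- arXiv:math/0409404 — 3 statements merged into one kernel-verified Lean document; each statement's English description precedes it below -/
import Mathlib

section
/- Let f ∈ m² be reduced, let I be a zero-dimensional ideal with I^{ea}(f) ⊆ I ⊆ m, and let 0 ≤ α < β ≤ 1 be rational numbers. Then γ_α(f;I) < γ_β(f;I). -/
open MvPowerSeries

noncomputable section

/-- `R = ℂ⟦x,y⟧`, the ring of formal power series in two variables over `ℂ`. -/
abbrev R2 : Type := MvPowerSeries (Fin 2) ℂ

/-- The maximal ideal `m = ⟨x, y⟩` of `ℂ⟦x,y⟧`. -/
def mm : Ideal R2 := Ideal.span {X 0, X 1}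

/-- `dim_ℂ R/I` as an extended natural number. -/
def edim (I : Ideal R2) : ℕ∞ := Cardinal.toENat (Module.rank ℂ (R2 ⧸ I))

/-- `dim_ℂ R/I` as a natural number (junk value `0` when infinite). -/
def fdim (I : Ideal R2) : ℕ := (edim I).toNat

/-- The formal partial derivative of a power series with respect to the `i`-th variable. -/
def pd (i : Fin 2) (f : R2) : R2 :=
  fun d => ((d i : ℂ) + 1) * coeff (d + Finsupp.single i 1) f

/-- The Tjurina ideal `I^{ea}(f) = ⟨∂f/∂x, ∂f/∂y, f⟩`. -/
def Tjurina (f : R2) : Ideal R2 := Ideal.span {pd 0 f, pd 1 f, f}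

/-- The intersection multiplicity `i(f,g) = dim_ℂ R/⟨f,g⟩ ∈ ℕ ∪ {∞}`. -/
def interNum (f g : R2) : ℕ∞ := edim (Ideal.span {f, g})

/-- `λ_α(f;I,g) = (α·i(f,g) + (1−α)·dim_ℂ(R/I))² / (i(f,g) − dim_ℂ(R/I))`. -/
def lam (α : ℚ) (f : R2) (I : Ideal R2) (g : R2) : ℝ :=
  ((α : ℝ) * ((interNum f g).toNat : ℝ) + (1 - (α : ℝ)) * (fdim I : ℝ)) ^ 2 /
    (((interNum f g).toNat : ℝ) - (fdim I : ℝ))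

/-- `γ_α(f;I) = max({(1+α)²·dim_ℂ(R/I)} ∪ {λ_α(f;I,g) : g ∈ I, i(f,g) ≤ 2·dim_ℂ(R/I)})`. -/
def gam (α : ℚ) (f : R2) (I : Ideal R2) : ℝ :=
  sSup ({(1 + (α : ℝ)) ^ 2 * (fdim I : ℝ)} ∪
    {x : ℝ | ∃ g ∈ I, interNum f g ≤ 2 * edim I ∧ x = lam α f I g})

/-- A complete intersection ideal: zero-dimensional and generated by two elements. -/
def IsCI (I : Ideal R2) : Prop := edim I < ⊤ ∧ ∃ a b : R2, I = Ideal.span {a, b}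

/-- `γ_α^{ea}(f) = max({0} ∪ {γ_α(f;I) : I a complete intersection ideal,
`I^{ea}(f) ⊆ I ⊆ m`})`. -/
def gamEA (α : ℚ) (f : R2) : ℝ :=
  sSup ({0} ∪ {x : ℝ | ∃ I : Ideal R2, IsCI I ∧ Tjurina f ≤ I ∧ I ≤ mm ∧ x = gam α f I})

/-- The maximal ideal is proper. -/
lemma mm_ne_top : mm ≠ ⊤ := by
  intro h
  have h1 : (1 : R2) ∈ mm := h ▸ Submodule.mem_top
  rw [mm, Ideal.mem_span_pair] at h1
  obtain ⟨a, b, hab⟩ := h1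
  have := congrArg (constantCoeff : R2 →+* ℂ) hab
  simp [map_add, map_mul, constantCoeff_X] at this

/-- `edim` is antitone. -/
lemma edim_antitone {I J : Ideal R2} (h : J ≤ I) : edim I ≤ edim J := by
  have hsurj : Function.Surjective
      (Ideal.quotientMapₐ I (AlgHom.id ℂ R2) (by simpa using h)) := by
    intro x
    obtain ⟨y, rfl⟩ := Ideal.Quotient.mk_surjective x
    exact ⟨Ideal.Quotient.mk J y, rfl⟩
  exact Cardinal.enat_gc.monotone_u
    ((Ideal.quotientMapₐ I (AlgHom.id ℂ R2)
      (by simpa using h)).toLinearMap.rank_le_of_surjective hsurj)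

set_option synthInstance.maxHeartbeats 1000000 in
/-- Proper ideals have `edim ≥ 1`. -/
lemma one_le_edim (I : Ideal R2) (h : I ≠ ⊤) : 1 ≤ edim I := by
  have := Ideal.Quotient.nontrivial_iff.mpr h
  have h1 : 1 ≤ Module.rank ℂ (R2 ⧸ I) :=
    Cardinal.one_le_iff_ne_zero.mpr (rank_pos (R := ℂ) (M := R2 ⧸ I)).ne'
  calc (1 : ℕ∞) = Cardinal.toENat 1 := by simp
  _ ≤ _ := Cardinal.enat_gc.monotone_u h1

/-- For `f ∈ m²` reduced, `I` zero-dimensional with `I^{ea}(f) ⊆ I ⊆ m`,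
and rationals `0 ≤ α < β ≤ 1`, one has `γ_α(f;I) < γ_β(f;I)`. -/
theorem stmt1 (f : R2) (hf2 : f ∈ mm ^ 2) (hred : Squarefree f)
    (I : Ideal R2) (hI0 : edim I < ⊤) (hTI : Tjurina f ≤ I) (hIm : I ≤ mm)
    (α β : ℚ) (hα : 0 ≤ α) (hαβ : α < β) (hβ : β ≤ 1) :
    gam α f I < gam β f I := by
  classical
  set Tset : ℚ → Set ℝ := fun q => ({(1 + (q : ℝ)) ^ 2 * (fdim I : ℝ)} ∪
    {x : ℝ | ∃ g ∈ I, interNum f g ≤ 2 * edim I ∧ x = lam q f I g}) with hTset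
  have hgam : ∀ q, gam q f I = sSup (Tset q) := fun q => rfl
  set d : ℕ := fdim I with hd
  have hI_ne : I ≠ ⊤ := fun h => mm_ne_top (top_le_iff.mp (h ▸ hIm))
  have hIfin : edim I ≠ ⊤ := hI0.ne
  have hedim : edim I = (d : ℕ∞) := (ENat.coe_toNat hIfin).symm
  have hd1 : 1 ≤ d := by
    have h1 : (1 : ℕ∞) ≤ edim I := one_le_edim I hI_ne
    rw [hedim] at h1
    exact_mod_cast h1
  have hdR : (1 : ℝ) ≤ (d : ℝ) := by exact_mod_cast hd1
  have hfI : f ∈ I := hTI (Ideal.subset_span (by simp [Tjurina]))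
  have hαR : (0 : ℝ) ≤ (α : ℝ) := by exact_mod_cast hα
  have hαβR : (α : ℝ) < (β : ℝ) := by exact_mod_cast hαβ
  have hβR : (β : ℝ) ≤ 1 := by exact_mod_cast hβ
  have hα1 : (α : ℝ) ≤ 1 := le_of_lt (lt_of_lt_of_le hαβR hβR)
  have h2d : 2 * edim I = ((2 * d : ℕ) : ℕ∞) := by rw [hedim]; push_cast; ring
  -- finiteness of the candidate sets
  have hfin : ∀ q : ℚ, (Tset q).Finite := by
    intro q
    apply Set.Finite.subset (Set.Finite.insert ((1 + (q : ℝ)) ^ 2 * (d : ℝ))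
      ((Set.finite_Iic (2 * d)).image
        (fun i : ℕ => ((q : ℝ) * i + (1 - (q : ℝ)) * d) ^ 2 / ((i : ℝ) - d))))
    rintro x (hx | ⟨g, hg, hcond, rfl⟩)
    · exact Or.inl (by simpa [hd] using hx)
    · right
      refine ⟨(interNum f g).toNat, ?_, ?_⟩
      · have : interNum f g ≤ ((2 * d : ℕ) : ℕ∞) := h2d ▸ hcond
        simpa using ENat.toNat_le_toNat this (WithTop.coe_ne_top)
      · simp [lam, ← hd]
  have hbddβ : BddAbove (Tset β) := (hfin β).bddAbove
  have hmemβ1 : (1 + (β : ℝ)) ^ 2 * (d : ℝ) ∈ Tset β :=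
    Or.inl (Set.mem_singleton_iff.mpr (by rw [hd]))
  have hle1 : (1 + (β : ℝ)) ^ 2 * (d : ℝ) ≤ gam β f I := by
    rw [hgam β]; exact le_csSup hbddβ hmemβ1
  have hsq : (1 + (α : ℝ)) ^ 2 * (d : ℝ) < (1 + (β : ℝ)) ^ 2 * (d : ℝ) := by
    have h1 : (1 + (α : ℝ)) ^ 2 < (1 + (β : ℝ)) ^ 2 := by nlinarith
    exact mul_lt_mul_of_pos_right h1 (lt_of_lt_of_le one_pos hdR)
  have hmemα : gam α f I ∈ Tset α := by
    rw [hgam α]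
    exact Set.Nonempty.csSup_mem ⟨_, Or.inl rfl⟩ (hfin α)
  rcases hmemα with hx | ⟨g, hg, hcond, hx⟩
  · rw [Set.mem_singleton_iff] at hx
    rw [hx, ← hd]
    exact lt_of_lt_of_le hsq hle1
  · -- gam α f I = lam α f I g
    have hJle : Ideal.span {f, g} ≤ I := by
      rw [Ideal.span_le]
      rintro x (rfl | rfl) <;> assumption
    have hIle : edim I ≤ interNum f g := edim_antitone hJle
    have hJfin : interNum f g ≠ ⊤ := by
      intro htop
      rw [htop, h2d, top_le_iff] at hcond
      exact (WithTop.coe_ne_top) hcond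
    set i : ℕ := (interNum f g).toNat with hi
    have hdi : d ≤ i := ENat.toNat_le_toNat hIle hJfin
    have hlam : ∀ q : ℚ, lam q f I g
        = ((q : ℝ) * i + (1 - (q : ℝ)) * d) ^ 2 / ((i : ℝ) - d) := by
      intro q; simp [lam, ← hd, ← hi]
    rcases eq_or_lt_of_le hdi with heq | hlt
    · -- i = d : the value is 0 (division by zero junk)
      have h0 : lam α f I g = 0 := by rw [hlam, ← heq, sub_self, div_zero]
      rw [hx, h0]
      have : (0 : ℝ) < (1 + (β : ℝ)) ^ 2 * (d : ℝ) := by nlinarith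
      exact lt_of_lt_of_le this hle1
    · -- d < i : strict monotonicity of lam in the parameter
      have hdiR : (d : ℝ) < (i : ℝ) := by exact_mod_cast hlt
      have hden : (0 : ℝ) < (i : ℝ) - d := by linarith
      have hnum0 : (0 : ℝ) ≤ (α : ℝ) * i + (1 - (α : ℝ)) * d := by nlinarith
      have hnum : (α : ℝ) * i + (1 - (α : ℝ)) * d < (β : ℝ) * i + (1 - (β : ℝ)) * d := by
        nlinarith
      have hlt2 : lam α f I g < lam β f I g := by
        rw [hlam, hlam]
        exact div_lt_div_of_pos_right (pow_lt_pow_left₀ hnum hnum0 two_ne_zero) hden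
      have hle2 : lam β f I g ≤ gam β f I := by
        rw [hgam β]
        exact le_csSup hbddβ (Or.inr ⟨g, hg, hcond, rfl⟩)
      rw [hx]
      exact lt_of_lt_of_le hlt2 hle2

end
end

section
/- Let p, q be positive integers and let f ∈ R be semi-quasihomogeneous with respect to (p,q) with ord_{(p,q)}(f) = pq (i.e. the (p,q)-leading form of f is reduced). Then for every 0 ≠ g ∈ R one has i(f,g) ≥ ord_{(p,q)}(g). -/
open MvPowerSeries

noncomputable section

/-- The monomial ideal `⟨x^β y^γ : βp + γq ≥ pq⟩`. -/
def wIdeal (p q : ℕ) : Ideal R2 :=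
  Ideal.span {s : R2 | ∃ β γ : ℕ, p * q ≤ p * β + q * γ ∧ s = X 0 ^ β * X 1 ^ γ}

/-- The equisingularity ideal `E(f) = ⟨∂f/∂x, ∂f/∂y⟩ + ⟨x^β y^γ : βp + γq ≥ pq⟩` of a
convenient semi-quasihomogeneous power series of `(p,q)`-order `pq`. -/
def Esing (p q : ℕ) (f : R2) : Ideal R2 := Ideal.span {pd 0 f, pd 1 f} ⊔ wIdeal p q

/-- `γ_α^{es}(f) = max({0} ∪ {γ_α(f;I) : I a complete intersection ideal, E(f) ⊆ I ⊆ m})`. -/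
def gamES (p q : ℕ) (α : ℚ) (f : R2) : ℝ :=
  sSup ({0} ∪ {x : ℝ | ∃ I : Ideal R2, IsCI I ∧ Esing p q f ≤ I ∧ I ≤ mm ∧ x = gam α f I})

/-- The `(p,q)`-leading form of `f`: the sum of the terms of `(p,q)`-degree `pq`. -/
def leadForm (p q : ℕ) (f : R2) : R2 :=
  fun d => if p * d 0 + q * d 1 = p * q then coeff d f else 0

/-- `f` is convenient semi-quasihomogeneous w.r.t. `(p,q)` with `ord_{(p,q)}(f) = pq`:
all terms have weighted degree at least `pq`, the `(p,q)`-leading form is reduced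
(squarefree), and the coefficients of `x^q` and `y^p` are nonzero. -/
def IsConvSQH (p q : ℕ) (f : R2) : Prop :=
  (∀ d : Fin 2 →₀ ℕ, coeff d f ≠ 0 → p * q ≤ p * d 0 + q * d 1) ∧
  Squarefree (leadForm p q f) ∧
  coeff (Finsupp.single 0 q) f ≠ 0 ∧ coeff (Finsupp.single 1 p) f ≠ 0

/-- `ord_{(p,q)}(g) = min{βp + γq : the coefficient of x^β y^γ in g is nonzero}`. -/
def wOrd (p q : ℕ) (g : R2) : ℕ :=
  sInf {n : ℕ | ∃ d : Fin 2 →₀ ℕ, coeff d g ≠ 0 ∧ n = p * d 0 + q * d 1}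

namespace Stmt15Aux

/-- The `(p,q)`-weight of a monomial exponent. -/
def wt (p q : ℕ) (d : Fin 2 →₀ ℕ) : ℕ := p * d 0 + q * d 1

lemma wt_add (p q : ℕ) (d e : Fin 2 →₀ ℕ) : wt p q (d + e) = wt p q d + wt p q e := by
  simp only [wt, Finsupp.add_apply]; ring

/-- The filtration by weighted order. -/
def FF (p q N : ℕ) : Submodule ℂ R2 where
  carrier := {h | ∀ d : Fin 2 →₀ ℕ, wt p q d < N → coeff d h = 0}
  add_mem' := by
    intro a b ha hb d hd
    rw [map_add, ha d hd, hb d hd, add_zero]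
  zero_mem' := by intro d _; simp
  smul_mem' := by
    intro c h hh d hd
    rw [map_smul, hh d hd, smul_zero]

lemma mem_FF {p q N : ℕ} {h : R2} :
    h ∈ FF p q N ↔ ∀ d : Fin 2 →₀ ℕ, wt p q d < N → coeff d h = 0 := Iff.rfl

lemma mul_mem_FF {p q A B : ℕ} {a b : R2} (ha : a ∈ FF p q A) (hb : b ∈ FF p q B) :
    a * b ∈ FF p q (A + B) := by
  intro d hd
  classical
  rw [coeff_mul]
  apply Finset.sum_eq_zero
  rintro ⟨d1, d2⟩ hmem
  rw [Finset.HasAntidiagonal.mem_antidiagonal] at hmem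
  have hw : wt p q d1 + wt p q d2 < A + B := by
    rw [← wt_add, hmem]; exact hd
  rcases lt_or_ge (wt p q d1) A with h1 | h1
  · rw [ha d1 h1, zero_mul]
  · rw [hb d2 (by omega), mul_zero]


/-- Monomials of weight `< M`, as a finset of exponent pairs. -/
def SS (p q M : ℕ) : Finset (ℕ × ℕ) :=
  (Finset.range M ×ˢ Finset.range M).filter fun v => p * v.1 + q * v.2 < M

lemma mem_SS {p q : ℕ} (hp : 0 < p) (hq : 0 < q) {M : ℕ} {v : ℕ × ℕ} :
    v ∈ SS p q M ↔ p * v.1 + q * v.2 < M := by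
  simp only [SS, Finset.mem_filter, Finset.mem_product, Finset.mem_range]
  constructor
  · tauto
  · intro h
    have h1 : v.1 ≤ p * v.1 := Nat.le_mul_of_pos_left _ hp
    have h2 : v.2 ≤ q * v.2 := Nat.le_mul_of_pos_left _ hq
    exact ⟨⟨by omega, by omega⟩, h⟩

/-- The exponent finsupp attached to a pair. -/
def mon (v : ℕ × ℕ) : Fin 2 →₀ ℕ := Finsupp.single 0 v.1 + Finsupp.single 1 v.2

lemma mon_apply0 (v : ℕ × ℕ) : mon v 0 = v.1 := by
  simp [mon, Finsupp.single_apply]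

lemma mon_apply1 (v : ℕ × ℕ) : mon v 1 = v.2 := by
  simp [mon, Finsupp.single_apply]

lemma eq_mon (d : Fin 2 →₀ ℕ) : mon (d 0, d 1) = d := by
  ext i
  fin_cases i
  · simpa using mon_apply0 (d 0, d 1)
  · simpa using mon_apply1 (d 0, d 1)

lemma wt_mon (p q : ℕ) (v : ℕ × ℕ) : wt p q (mon v) = p * v.1 + q * v.2 := by
  rw [wt, mon_apply0, mon_apply1]

/-- Truncation map onto the space of coefficients of weight `< M`. -/
def proj (p q M : ℕ) : R2 →ₗ[ℂ] (↥(SS p q M) → ℂ) where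
  toFun h := fun v => coeff (mon v.1) h
  map_add' a b := by funext v; simp
  map_smul' c a := by funext v; simp

/-- A linear section of `proj`. -/
def lft (p q M : ℕ) : (↥(SS p q M) → ℂ) →ₗ[ℂ] R2 where
  toFun u := fun d => if h : (d 0, d 1) ∈ SS p q M then u ⟨(d 0, d 1), h⟩ else 0
  map_add' a b := by
    apply MvPowerSeries.ext; intro d
    show (if h : (d 0, d 1) ∈ SS p q M then (a + b) ⟨(d 0, d 1), h⟩ else 0) = (if h : (d 0, d 1) ∈ SS p q M then a ⟨(d 0, d 1), h⟩ else 0) + (if h : (d 0, d 1) ∈ SS p q M then b ⟨(d 0, d 1), h⟩ else 0)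
    by_cases h : (d 0, d 1) ∈ SS p q M
    · simp [h]
    · simp [h]
  map_smul' c a := by
    apply MvPowerSeries.ext; intro d
    show (if h : (d 0, d 1) ∈ SS p q M then (c • a) ⟨(d 0, d 1), h⟩ else 0) = c • (if h : (d 0, d 1) ∈ SS p q M then a ⟨(d 0, d 1), h⟩ else 0)
    by_cases h : (d 0, d 1) ∈ SS p q M
    · simp [h, Pi.smul_apply]
    · simp [h, Pi.smul_apply]

lemma coeff_lft (p q M : ℕ) (u : ↥(SS p q M) → ℂ) (d : Fin 2 →₀ ℕ) :
    coeff d (lft p q M u) =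
      if h : (d 0, d 1) ∈ SS p q M then u ⟨(d 0, d 1), h⟩ else 0 := rfl

lemma proj_lft (p q M : ℕ) (u : ↥(SS p q M) → ℂ) : proj p q M (lft p q M u) = u := by
  funext v
  show coeff (mon v.1) (lft p q M u) = u v
  rw [coeff_lft, mon_apply0, mon_apply1]
  rcases v with ⟨⟨v1, v2⟩, hv⟩
  exact dif_pos hv

lemma proj_surjective (p q M : ℕ) : Function.Surjective (proj p q M) :=
  fun u => ⟨lft p q M u, proj_lft p q M u⟩

lemma sub_lft_mem (p q : ℕ) (hp : 0 < p) (hq : 0 < q) (M : ℕ) (a : R2) :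
    a - lft p q M (proj p q M a) ∈ FF p q M := by
  intro d hd
  rw [map_sub, coeff_lft]
  have hmem : (d 0, d 1) ∈ SS p q M := (mem_SS hp hq).mpr hd
  rw [dif_pos hmem]
  show coeff d a - coeff (mon (d 0, d 1)) a = 0
  rw [eq_mon, sub_self]

lemma proj_eq_zero_of_mem_FF {p q : ℕ} (hp : 0 < p) (hq : 0 < q) {M : ℕ} {h : R2}
    (hh : h ∈ FF p q M) : proj p q M h = 0 := by
  funext v
  show coeff (mon v.1) h = 0
  apply hh
  rw [wt_mon]
  exact (mem_SS hp hq).mp v.2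

lemma finrank_model (p q M : ℕ) :
    Module.finrank ℂ (↥(SS p q M) → ℂ) = (SS p q M).card := by
  rw [Module.finrank_fintype_fun_eq_card, Fintype.card_coe]


lemma exists_bezout (p q : ℕ) (hq : 0 < q) :
    ∃ u : ℕ, p * u ≡ Nat.gcd p q [MOD q] := by
  refine ⟨(Nat.gcdA p q % q).toNat, ?_⟩
  rw [Nat.modEq_iff_dvd]
  have hq' : (q : ℤ) ≠ 0 := by exact_mod_cast hq.ne'
  have h0 : (0:ℤ) ≤ Nat.gcdA p q % q := Int.emod_nonneg _ hq'
  have hb := Nat.gcd_eq_gcd_ab p q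
  have hE := Int.mul_ediv_add_emod (Nat.gcdA p q) q
  refine ⟨Nat.gcdB p q + p * (Nat.gcdA p q / q), ?_⟩
  push_cast [Int.toNat_of_nonneg h0]
  linear_combination hb - (p:ℤ) * hE

lemma card_SS_ineq (p q : ℕ) (hp : 0 < p) (hq : 0 < q) (n : ℕ) :
    (SS p q n).card + (SS p q (p * q)).card + n ≤ (SS p q (n + p * q)).card := by
  classical
  set G := Nat.gcd p q with hG
  have hG0 : 0 < G := Nat.gcd_pos_of_pos_left q hp
  have hGp : G ∣ p := Nat.gcd_dvd_left p q
  have hGq : G ∣ q := Nat.gcd_dvd_right p q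
  obtain ⟨u, hu⟩ := exists_bezout p q hq
  set aa : ℕ → ℕ := fun t => ((t / G) * u + (t % G) * (q / G)) % q with haa
  have ha_lt : ∀ t, aa t < q := fun t => Nat.mod_lt _ hq
  have hpa_lt : ∀ t, p * aa t < p * q := fun t => mul_lt_mul_of_pos_left (ha_lt t) hp
  have hpq' : p * (q / G) = (p / G) * q := by
    apply Nat.eq_of_mul_eq_mul_left hG0
    calc G * (p * (q / G)) = p * (G * (q / G)) := by ring
      _ = p * q := by rw [Nat.mul_div_cancel' hGq]
      _ = (G * (p / G)) * q := by rw [Nat.mul_div_cancel' hGp]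
      _ = G * ((p / G) * q) := by ring
  have hmod : ∀ t, p * aa t ≡ G * (t / G) [MOD q] := by
    intro t
    have h1 : p * aa t ≡ p * ((t / G) * u + (t % G) * (q / G)) [MOD q] :=
      Nat.ModEq.mul_left p (Nat.mod_modEq _ q)
    have h2 : p * ((t / G) * u + (t % G) * (q / G))
        = (t / G) * (p * u) + (t % G) * ((p / G) * q) := by
      rw [← hpq']; ring
    have h3 : (t / G) * (p * u) ≡ (t / G) * G [MOD q] := Nat.ModEq.mul_left _ hu
    have h4 : (t % G) * ((p / G) * q) ≡ 0 [MOD q] :=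
      (Nat.modEq_zero_iff_dvd).mpr ⟨(t % G) * (p / G), by ring⟩
    calc p * aa t ≡ (t / G) * (p * u) + (t % G) * ((p / G) * q) [MOD q] := by
          rw [← h2]; exact h1
      _ ≡ (t / G) * G + 0 [MOD q] := Nat.ModEq.add h3 h4
      _ = G * (t / G) := by ring
  set bb : ℕ → ℕ := fun t => (p * q + G * (t / G) - p * aa t) / q with hbb
  have hle' : ∀ t, p * aa t ≤ p * q + G * (t / G) := by
    intro t
    exact le_of_lt (lt_of_lt_of_le (hpa_lt t) (Nat.le_add_right _ _))
  have hdvd : ∀ t, q ∣ (p * q + G * (t / G) - p * aa t) := by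
    intro t
    have h5 : p * aa t ≡ p * q + G * (t / G) [MOD q] := by
      calc p * aa t ≡ G * (t / G) [MOD q] := hmod t
        _ = 0 + G * (t / G) := by rw [zero_add]
        _ ≡ p * q + G * (t / G) [MOD q] :=
            Nat.ModEq.add_right _ (((Nat.modEq_zero_iff_dvd).mpr (dvd_mul_left q p)).symm)
    exact (Nat.modEq_iff_dvd' (hle' t)).mp h5
  have hwt' : ∀ t, p * aa t + q * bb t = p * q + G * (t / G) := by
    intro t
    have h6 : q * bb t = p * q + G * (t / G) - p * aa t := by
      simp only [hbb]
      exact Nat.mul_div_cancel' (hdvd t)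
    have := hle' t
    omega
  -- the three pieces
  set A := (SS p q n).image (fun v : ℕ × ℕ => (v.1 + q, v.2)) with hA
  set B := SS p q (p * q) with hB
  set C := (Finset.range n).image (fun t => (aa t, bb t)) with hC
  have hcardA : A.card = (SS p q n).card := by
    rw [hA]
    apply Finset.card_image_of_injOn
    rintro ⟨v1, v2⟩ _ ⟨w1, w2⟩ _ h
    simp only [Prod.mk.injEq] at h ⊢
    exact ⟨by omega, h.2⟩
  have hcardC : C.card = n := by
    rw [hC]
    rw [Finset.card_image_of_injOn, Finset.card_range]
    intro t _ t' _ hEq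
    simp only [Prod.mk.injEq] at hEq
    obtain ⟨e1, e2⟩ := hEq
    have hsum : p * aa t + q * bb t = p * aa t' + q * bb t' := by rw [e1, e2]
    rw [hwt' t, hwt' t'] at hsum
    have htdiv : t / G = t' / G := Nat.eq_of_mul_eq_mul_left hG0 (by omega)
    have hme : (t / G) * u + (t % G) * (q / G) ≡ (t' / G) * u + (t' % G) * (q / G) [MOD q] := by
      simpa only [haa, Nat.ModEq] using e1
    rw [htdiv] at hme
    have hme2 : (t % G) * (q / G) ≡ (t' % G) * (q / G) [MOD q] :=
      Nat.ModEq.add_left_cancel' _ hme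
    have hqG0 : 0 < q / G := Nat.div_pos (Nat.le_of_dvd hq hGq) hG0
    have hGqq : G * (q / G) = q := Nat.mul_div_cancel' hGq
    have hlt : ∀ s : ℕ, s < G → s * (q / G) < q := by
      intro s hs
      calc s * (q / G) ≤ (G - 1) * (q / G) := Nat.mul_le_mul_right _ (by omega)
        _ < q := by
          have hdist : (G - 1) * (q / G) + 1 * (q / G) = G * (q / G) := by
            rw [← Nat.add_mul]; congr 1; omega
          omega
    have hval : (t % G) * (q / G) = (t' % G) * (q / G) := by
      have l1 := Nat.mod_eq_of_lt (hlt (t % G) (Nat.mod_lt t hG0))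
      have l2 := Nat.mod_eq_of_lt (hlt (t' % G) (Nat.mod_lt t' hG0))
      rw [Nat.ModEq] at hme2
      rw [l1, l2] at hme2
      exact hme2
    have hmodt : t % G = t' % G := Nat.eq_of_mul_eq_mul_right hqG0 hval
    calc t = G * (t / G) + t % G := (Nat.div_add_mod t G).symm
      _ = G * (t' / G) + t' % G := by rw [htdiv, hmodt]
      _ = t' := Nat.div_add_mod t' G
  -- memberships
  have hA_sub : A ⊆ SS p q (n + p * q) := by
    intro v hv
    rw [hA, Finset.mem_image] at hv
    obtain ⟨w, hw, rfl⟩ := hv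
    rw [mem_SS hp hq] at hw ⊢
    have : p * (w.1 + q) = p * w.1 + p * q := by ring
    simp only []
    omega
  have hB_sub : B ⊆ SS p q (n + p * q) := by
    intro v hv
    rw [hB, mem_SS hp hq] at hv
    rw [mem_SS hp hq]
    omega
  have hC_sub : C ⊆ SS p q (n + p * q) := by
    intro v hv
    rw [hC, Finset.mem_image] at hv
    obtain ⟨t, ht, rfl⟩ := hv
    rw [Finset.mem_range] at ht
    rw [mem_SS hp hq]
    have h7 : G * (t / G) ≤ t := by
      rw [mul_comm]; exact Nat.div_mul_le_self t G
    have := hwt' t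
    simp only [] at this ⊢
    omega
  -- first coordinates
  have hvA1 : ∀ v ∈ A, q ≤ v.1 := by
    intro v hv
    rw [hA, Finset.mem_image] at hv
    obtain ⟨w, _, rfl⟩ := hv
    simp only []
    omega
  have hvB1 : ∀ v ∈ B, v.1 < q ∧ p * v.1 + q * v.2 < p * q := by
    intro v hv
    rw [hB, mem_SS hp hq] at hv
    refine ⟨?_, hv⟩
    by_contra hc
    push_neg at hc
    have : p * q ≤ p * v.1 := Nat.mul_le_mul (le_refl p) hc
    omega
  have hvC1 : ∀ v ∈ C, v.1 < q ∧ p * q ≤ p * v.1 + q * v.2 := by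
    intro v hv
    rw [hC, Finset.mem_image] at hv
    obtain ⟨t, _, rfl⟩ := hv
    have := hwt' t
    exact ⟨ha_lt t, by simp only []; omega⟩
  -- disjointness
  have hdAB : Disjoint A B := Finset.disjoint_left.mpr (fun v ha hb => by
    have := hvA1 v ha; have := hvB1 v hb; omega)
  have hdAC : Disjoint A C := Finset.disjoint_left.mpr (fun v ha hc => by
    have := hvA1 v ha; have := hvC1 v hc; omega)
  have hdBC : Disjoint B C := Finset.disjoint_left.mpr (fun v hb hc => by
    have := hvB1 v hb; have := hvC1 v hc; omega)
  have hdA_BC : Disjoint A (B ∪ C) := Finset.disjoint_union_right.mpr ⟨hdAB, hdAC⟩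
  have hsub : A ∪ (B ∪ C) ⊆ SS p q (n + p * q) := by
    intro v hv
    rcases Finset.mem_union.mp hv with h | h
    · exact hA_sub h
    · rcases Finset.mem_union.mp h with h | h
      · exact hB_sub h
      · exact hC_sub h
  have hcount : (A ∪ (B ∪ C)).card = (SS p q n).card + (B.card + n) := by
    rw [Finset.card_union_of_disjoint hdA_BC, Finset.card_union_of_disjoint hdBC,
      hcardA, hcardC]
  have := Finset.card_le_card hsub
  omega


theorem main (p q : ℕ) (hp : 0 < p) (hq : 0 < q) (f g : R2)
    (hf : f ∈ FF p q (p * q)) (n : ℕ) (hg : g ∈ FF p q n) :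
    (n : Cardinal) ≤ Module.rank ℂ (R2 ⧸ Ideal.span {f, g}) := by
  classical
  set I : Ideal R2 := Ideal.span {f, g} with hI
  let Kf : Submodule ℂ (↥(SS p q (n + p * q)) → ℂ) :=
    LinearMap.range ((proj p q (n + p * q)).comp (LinearMap.mulRight ℂ f))
  let Kg : Submodule ℂ (↥(SS p q (n + p * q)) → ℂ) :=
    LinearMap.range ((proj p q (n + p * q)).comp (LinearMap.mulRight ℂ g))
  set K : Submodule ℂ (↥(SS p q (n + p * q)) → ℂ) := Kf ⊔ Kg with hK
  let φ : R2 →ₗ[ℂ] ((↥(SS p q (n + p * q)) → ℂ) ⧸ K) := K.mkQ.comp (proj p q (n + p * q))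
  have hker : I.restrictScalars ℂ ≤ LinearMap.ker φ := by
    intro x hx
    rcases Ideal.mem_span_pair.mp hx with ⟨a, b, rfl⟩
    have h1 : proj p q (n + p * q) (a * f) ∈ K := by
      apply Submodule.mem_sup_left
      exact ⟨a, rfl⟩
    have h2 : proj p q (n + p * q) (b * g) ∈ K := by
      apply Submodule.mem_sup_right
      exact ⟨b, rfl⟩
    have : φ (a * f + b * g) = 0 := by
      show K.mkQ (proj p q (n + p * q) (a * f + b * g)) = 0
      rw [map_add, map_add, Submodule.mkQ_apply, Submodule.mkQ_apply,
        (Submodule.Quotient.mk_eq_zero K).mpr h1, (Submodule.Quotient.mk_eq_zero K).mpr h2,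
        add_zero]
    exact this
  let ψ := Submodule.liftQ (I.restrictScalars ℂ) φ hker
  have hφsurj : Function.Surjective φ :=
    (Submodule.mkQ_surjective K).comp (proj_surjective p q (n + p * q))
  have hψsurj : Function.Surjective ψ := by
    have hcomp : ⇑(ψ.comp (I.restrictScalars ℂ).mkQ) = ⇑φ := by
      rw [Submodule.liftQ_mkQ]
    rw [LinearMap.coe_comp] at hcomp
    exact Function.Surjective.of_comp (g := ⇑(I.restrictScalars ℂ).mkQ) (hcomp ▸ hφsurj)
  -- dimension bounds for Kf and Kg
  have hKf : Module.finrank ℂ Kf ≤ (SS p q n).card := by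
    have hle : Kf ≤ LinearMap.range
        ((proj p q (n + p * q)).comp ((LinearMap.mulRight ℂ f).comp (lft p q n))) := by
      rintro x ⟨a, rfl⟩
      refine ⟨proj p q n a, ?_⟩
      show proj p q (n + p * q) (lft p q n (proj p q n a) * f) = proj p q (n + p * q) (a * f)
      have h1 : lft p q n (proj p q n a) - a ∈ FF p q n := by
        have h0 := (FF p q n).neg_mem (sub_lft_mem p q hp hq n a)
        rwa [neg_sub] at h0
      have hmem : (lft p q n (proj p q n a) - a) * f ∈ FF p q (n + p * q) := by
        exact mul_mem_FF h1 hf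
      have h2 := proj_eq_zero_of_mem_FF hp hq hmem
      rw [sub_mul, map_sub] at h2
      exact sub_eq_zero.mp h2
    calc Module.finrank ℂ Kf
        ≤ Module.finrank ℂ (LinearMap.range
          ((proj p q (n + p * q)).comp ((LinearMap.mulRight ℂ f).comp (lft p q n)))) :=
          Submodule.finrank_mono hle
      _ ≤ Module.finrank ℂ (↥(SS p q n) → ℂ) := LinearMap.finrank_range_le _
      _ = (SS p q n).card := finrank_model p q n
  have hKg : Module.finrank ℂ Kg ≤ (SS p q (p * q)).card := by
    have hle : Kg ≤ LinearMap.range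
        ((proj p q (n + p * q)).comp ((LinearMap.mulRight ℂ g).comp (lft p q (p * q)))) := by
      rintro x ⟨a, rfl⟩
      refine ⟨proj p q (p * q) a, ?_⟩
      show proj p q (n + p * q) (lft p q (p * q) (proj p q (p * q) a) * g) = proj p q (n + p * q) (a * g)
      have h1 : lft p q (p * q) (proj p q (p * q) a) - a ∈ FF p q (p * q) := by
        have h0 := (FF p q (p * q)).neg_mem (sub_lft_mem p q hp hq (p * q) a)
        rwa [neg_sub] at h0
      have hmem : (lft p q (p * q) (proj p q (p * q) a) - a) * g ∈ FF p q (n + p * q) := by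
        rw [add_comm n (p * q)]
        exact mul_mem_FF h1 hg
      have h2 := proj_eq_zero_of_mem_FF hp hq hmem
      rw [sub_mul, map_sub] at h2
      exact sub_eq_zero.mp h2
    calc Module.finrank ℂ Kg
        ≤ Module.finrank ℂ (LinearMap.range
          ((proj p q (n + p * q)).comp ((LinearMap.mulRight ℂ g).comp (lft p q (p * q))))) :=
          Submodule.finrank_mono hle
      _ ≤ Module.finrank ℂ (↥(SS p q (p * q)) → ℂ) := LinearMap.finrank_range_le _
      _ = (SS p q (p * q)).card := finrank_model p q (p * q)
  have hKsum : Module.finrank ℂ K ≤ (SS p q n).card + (SS p q (p * q)).card := by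
    have := Submodule.finrank_sup_add_finrank_inf_eq Kf Kg
    rw [hK]
    omega
  have hquot := Submodule.finrank_quotient_add_finrank K
  have hU : Module.finrank ℂ (↥(SS p q (n + p * q)) → ℂ) = (SS p q (n + p * q)).card := finrank_model p q (n + p * q)
  have hcard := card_SS_ineq p q hp hq n
  have hnle : n ≤ Module.finrank ℂ ((↥(SS p q (n + p * q)) → ℂ) ⧸ K) := by
    omega
  calc (n : Cardinal) ≤ (Module.finrank ℂ ((↥(SS p q (n + p * q)) → ℂ) ⧸ K) : Cardinal) := by
        exact_mod_cast Nat.cast_le.mpr hnle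
    _ = Module.rank ℂ ((↥(SS p q (n + p * q)) → ℂ) ⧸ K) := Module.finrank_eq_rank ℂ _
    _ ≤ Module.rank ℂ (R2 ⧸ I.restrictScalars ℂ) := LinearMap.rank_le_of_surjective ψ hψsurj
    _ = Module.rank ℂ (R2 ⧸ I) := (Submodule.Quotient.restrictScalarsEquiv ℂ I).rank_eq

end Stmt15Aux

/-- If `f` is semi-quasihomogeneous w.r.t. `(p,q)` with
`ord_{(p,q)}(f) = pq` (i.e. its `(p,q)`-leading form is reduced), then for every
`0 ≠ g ∈ R` one has `i(f,g) ≥ ord_{(p,q)}(g)`. -/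
theorem stmt15 (p q : ℕ) (hp : 0 < p) (hq : 0 < q) (f : R2)
    (hord : ∀ d : Fin 2 →₀ ℕ, coeff d f ≠ 0 → p * q ≤ p * d 0 + q * d 1)
    (hord' : ∃ d : Fin 2 →₀ ℕ, coeff d f ≠ 0 ∧ p * d 0 + q * d 1 = p * q)
    (hsqf : Squarefree (leadForm p q f)) :
    ∀ g : R2, g ≠ 0 → (wOrd p q g : ℕ∞) ≤ interNum f g := by
  intro g hg
  have hfF : f ∈ Stmt15Aux.FF p q (p * q) := by
    intro d hd
    by_contra hc
    exact absurd (hord d hc) (by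
      have : Stmt15Aux.wt p q d = p * d 0 + q * d 1 := rfl
      omega)
  have hgF : g ∈ Stmt15Aux.FF p q (wOrd p q g) := by
    intro d hd
    unfold wOrd at hd
    by_contra hc
    have hmem : Stmt15Aux.wt p q d ∈
        {n : ℕ | ∃ d : Fin 2 →₀ ℕ, coeff d g ≠ 0 ∧ n = p * d 0 + q * d 1} :=
      ⟨d, hc, rfl⟩
    exact absurd (Nat.sInf_le hmem) (by omega)
  have hmain := Stmt15Aux.main p q hp hq f g hfF (wOrd p q g) hgF
  show ((wOrd p q g : ℕ∞) ≤
    Cardinal.toENat (Module.rank ℂ (R2 ⧸ Ideal.span {f, g})))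
  calc (wOrd p q g : ℕ∞) = Cardinal.toENat ((wOrd p q g : ℕ) : Cardinal) :=
        (Cardinal.toENat_nat _).symm
    _ ≤ Cardinal.toENat (Module.rank ℂ (R2 ⧸ Ideal.span {f, g})) :=
        Cardinal.toENat.monotone' hmain


end
end

section
/- Let p, q be positive integers, let A, B, C ∈ ℕ, and let g, h ∈ R with L_{(p,q)}(g) = x^A y^B and L_{(p,q)}(h) = y^C. Put M := ⟨x^β y^γ : βp + γq ≥ pq⟩, J' := ⟨g, h⟩ + M and J := ⟨x^A y^B, y^C⟩ + M. Then dim_ℂ R/J' ≤ dim_ℂ R/J. If moreover Ap + Bq ≤ pq and B ≤ C ≤ p, then dim_ℂ R/J = Ap + Bq − AB − Σ_{i=1}^{A−1} ⌊p·i/q⌋ − Σ_{i=1}^{B−1} ⌊q·i/p⌋ − Σ_{i=C}^{p−1} min{A, ⌈q − q·i/p⌉}. Moreover, if B = 0 then dim_ℂ R/J ≤ A·C. -/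
open MvPowerSeries

noncomputable section

/-- `d₀` is the exponent of the leading monomial of `h` w.r.t. the local weighted degree
ordering `<_{(p,q)}`: `d₀` occurs in `h` and every other monomial occurring in `h` is
smaller, i.e. has bigger weighted degree, or equal weighted degree and smaller `y`-exponent. -/
def IsLeadMon (p q : ℕ) (h : R2) (d₀ : Fin 2 →₀ ℕ) : Prop :=
  coeff d₀ h ≠ 0 ∧ ∀ d : Fin 2 →₀ ℕ, coeff d h ≠ 0 → d = d₀ ∨
    p * d₀ 0 + q * d₀ 1 < p * d 0 + q * d 1 ∨
    (p * d 0 + q * d 1 = p * d₀ 0 + q * d₀ 1 ∧ d 1 < d₀ 1)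

abbrev E2 : Type := Fin 2 →₀ ℕ

def enc (ij : ℕ × ℕ) : E2 := Finsupp.single 0 ij.1 + Finsupp.single 1 ij.2

@[simp] lemma enc_app0 (ij : ℕ × ℕ) : enc ij 0 = ij.1 := by
  simp [enc, Finsupp.single_apply]

@[simp] lemma enc_app1 (ij : ℕ × ℕ) : enc ij 1 = ij.2 := by
  simp [enc, Finsupp.single_apply]

lemma enc_surj (d : E2) : d = enc (d 0, d 1) := by
  ext a
  match a with
  | 0 => simp
  | 1 => simp

lemma enc_inj : Function.Injective enc := by
  intro a b hab
  have h0 := congrArg (fun f : E2 => f 0) hab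
  have h1 := congrArg (fun f : E2 => f 1) hab
  simp at h0 h1
  exact Prod.ext h0 h1

lemma enc_le_iff (a b : ℕ × ℕ) : enc a ≤ enc b ↔ a.1 ≤ b.1 ∧ a.2 ≤ b.2 := by
  rw [Finsupp.le_iff]
  constructor
  · intro h
    constructor
    · by_cases h0 : a.1 = 0
      · simp [h0]
      · have := h 0 (by simp [h0]); simpa using this
    · by_cases h1 : a.2 = 0
      · simp [h1]
      · have := h 1 (by simp [h1]); simpa using this
  · rintro ⟨h0, h1⟩ s _
    match s with
    | 0 => simpa using h0
    | 1 => simpa using h1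

def monOf (S : Set E2) : Set R2 := (fun d => (monomial d 1 : R2)) '' S

lemma support_of_mem_span {S : Set E2} (hup : ∀ d ∈ S, ∀ e : E2, d + e ∈ S)
    {f : R2} (hf : f ∈ Ideal.span (monOf S)) : ∀ d, coeff d f ≠ 0 → d ∈ S := by
  classical
  refine Submodule.span_induction ?_ ?_ ?_ ?_ hf
  · rintro x ⟨e, he, rfl⟩ d hd
    rw [coeff_monomial] at hd
    by_cases h : d = e
    · exact h ▸ he
    · simp [h] at hd
  · intro d hd; simp at hd
  · intro x y _ _ hx hy d hd
    rw [map_add] at hd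
    by_cases h : coeff d x ≠ 0
    · exact hx d h
    · push_neg at h
      exact hy d (by intro h'; rw [h, h', add_zero] at hd; exact hd rfl)
  · intro a x _ hx d hd
    rw [smul_eq_mul, coeff_mul] at hd
    obtain ⟨pr, hpr, hne⟩ := Finset.exists_ne_zero_of_sum_ne_zero hd
    have h2 : coeff pr.2 x ≠ 0 := right_ne_zero_of_mul hne
    have := hup pr.2 (hx pr.2 h2) pr.1
    rwa [add_comm, Finset.HasAntidiagonal.mem_antidiagonal.mp hpr] at this

lemma mem_span_of_support {G : Finset E2} {f : R2}
    (hf : ∀ d, coeff d f ≠ 0 → ∃ g ∈ G, g ≤ d) :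
    f ∈ Ideal.span (monOf ↑G) := by
  classical
  set c : E2 → E2 := fun d => if h : ∃ g ∈ G, g ≤ d then h.choose else 0 with hc
  have hcmem : ∀ d : E2, (∃ g ∈ G, g ≤ d) → (c d ∈ G ∧ c d ≤ d) := by
    intro d h
    simp only [hc, dif_pos h]
    exact ⟨h.choose_spec.1, h.choose_spec.2⟩
  set qt : E2 → R2 := fun g => fun e => if c (e + g) = g then coeff (e + g) f else 0 with hqt
  have hfeq : f = ∑ g ∈ G, monomial g 1 * qt g := by
    apply MvPowerSeries.ext
    intro d
    rw [map_sum]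
    have hterm : ∀ g ∈ G, coeff d (monomial g 1 * qt g)
        = if g ≤ d ∧ c d = g then coeff d f else 0 := by
      intro g _
      rw [coeff_monomial_mul]
      by_cases hg : g ≤ d
      · rw [if_pos hg, one_mul, coeff_apply]
        have : d - g + g = d := tsub_add_cancel_of_le hg
        simp only [hqt, this]
        by_cases h2 : c d = g
        · rw [if_pos h2, if_pos ⟨hg, h2⟩, coeff_apply]
        · rw [if_neg h2, if_neg (by tauto)]
      · rw [if_neg hg, if_neg (by tauto)]
    rw [Finset.sum_congr rfl hterm]
    by_cases hf0 : coeff d f = 0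
    · simp [hf0]
    · obtain ⟨hmem, hle⟩ := hcmem d (hf d hf0)
      rw [Finset.sum_eq_single_of_mem (c d) hmem]
      · rw [if_pos ⟨hle, rfl⟩]
      · intro g _ hgne
        rw [if_neg (by rintro ⟨-, rfl⟩; exact hgne rfl)]
  rw [hfeq]
  apply Ideal.sum_mem
  intro g hg
  rw [mul_comm]
  exact Ideal.mul_mem_left _ _ (Ideal.subset_span ⟨g, by simpa using hg, rfl⟩)

lemma rank_quotient_eq_card {S : Set E2} {Tf : Finset E2}
    (hT : ∀ d, d ∈ Tf ↔ d ∉ S) {I : Ideal R2}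
    (hI : ∀ f : R2, f ∈ I ↔ ∀ d, coeff d f ≠ 0 → d ∈ S) :
    Module.rank ℂ (R2 ⧸ I) = Tf.card := by
  classical
  set Φ : R2 →ₗ[ℂ] (↥Tf → ℂ) := LinearMap.pi (fun d => coeff (d : E2)) with hΦ
  have hker : LinearMap.ker Φ = I.restrictScalars ℂ := by
    ext f
    simp only [LinearMap.mem_ker, Submodule.restrictScalars_mem, hI]
    constructor
    · intro h d hd
      by_contra hdS
      have : coeff d f = 0 := congrFun h ⟨d, (hT d).mpr hdS⟩
      exact hd this
    · intro h
      funext d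
      by_contra hne
      exact (hT d).mp d.2 (h d hne)
  have hsurj : Function.Surjective Φ := by
    intro v
    refine ⟨fun e => if h : e ∈ Tf then v ⟨e, h⟩ else 0, ?_⟩
    funext d
    simp only [hΦ, LinearMap.pi_apply, coeff_apply]
    exact dif_pos d.2
  have e1 := LinearMap.quotKerEquivOfSurjective Φ hsurj
  have e2 := Submodule.quotEquivOfEq _ _ hker
  have e3 := Submodule.Quotient.restrictScalarsEquiv ℂ I
  rw [← e3.rank_eq, ← e2.rank_eq, e1.rank_eq, rank_fun', Fintype.card_coe]

lemma rank_quotient_le_card {Tf : Finset E2} {I : Ideal R2}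
    (hspan : Submodule.span ℂ (monOf ↑Tf) ⊔ I.restrictScalars ℂ = ⊤) :
    Module.rank ℂ (R2 ⧸ I) ≤ Tf.card := by
  classical
  set I' := I.restrictScalars ℂ with hI'
  set mkQ := I'.mkQ with hmkQ
  have htop : Submodule.span ℂ (mkQ '' monOf ↑Tf) = ⊤ := by
    rw [← Submodule.map_span]
    have : Submodule.map mkQ (Submodule.span ℂ (monOf ↑Tf) ⊔ I') = ⊤ := by
      rw [hspan, Submodule.map_top, Submodule.range_mkQ]
    have hbot : Submodule.map mkQ I' = ⊥ := by
      rw [eq_bot_iff, Submodule.map_le_iff_le_comap]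
      exact le_of_eq (Submodule.ker_mkQ I').symm
    rwa [Submodule.map_sup, hbot, sup_bot_eq] at this
  have h1 : Module.rank ℂ (R2 ⧸ I') ≤ (Tf.card : Cardinal) := by
    calc Module.rank ℂ (R2 ⧸ I') = Module.rank ℂ (⊤ : Submodule ℂ (R2 ⧸ I')) := (rank_top ℂ _).symm
    _ = Module.rank ℂ (Submodule.span ℂ (mkQ '' monOf ↑Tf)) := by rw [htop]
    _ ≤ Cardinal.mk (mkQ '' monOf ↑Tf) := rank_span_le _
    _ ≤ Cardinal.mk (monOf ↑Tf) := Cardinal.mk_image_le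
    _ ≤ Cardinal.mk ↑(↑Tf : Set E2) := by unfold monOf; exact Cardinal.mk_image_le
    _ = Tf.card := Cardinal.mk_coe_finset
  rwa [← (Submodule.Quotient.restrictScalarsEquiv ℂ I).rank_eq]

def w2 (p q : ℕ) (d : E2) : ℕ := p * d 0 + q * d 1

lemma w2_add (p q : ℕ) (d e : E2) : w2 p q (d + e) = w2 p q d + w2 p q e := by
  simp only [w2, Finsupp.add_apply]; ring

lemma enc_le_iff' (ij : ℕ × ℕ) (d : E2) : enc ij ≤ d ↔ ij.1 ≤ d 0 ∧ ij.2 ≤ d 1 := by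
  conv_lhs => rw [enc_surj d]
  rw [enc_le_iff]

def GM (p q : ℕ) : Finset E2 :=
  ((Finset.range (q+1) ×ˢ Finset.range (p+1)).filter
    (fun ij => p*q ≤ p*ij.1 + q*ij.2)).image enc

lemma GM_w {p q : ℕ} {g : E2} (hg : g ∈ GM p q) : p*q ≤ w2 p q g := by
  simp only [GM, Finset.mem_image, Finset.mem_filter] at hg
  obtain ⟨ij, ⟨_, hw⟩, rfl⟩ := hg
  simpa [w2] using hw

lemma GM_cover {p q : ℕ} {d : E2} (hd : p*q ≤ w2 p q d) : ∃ g ∈ GM p q, g ≤ d := by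
  simp only [w2] at hd
  by_cases h0 : q ≤ d 0
  · refine ⟨enc (q, 0), ?_, ?_⟩
    · simp only [GM, Finset.mem_image]
      exact ⟨(q,0), by simp [Finset.mem_filter, Finset.mem_product], rfl⟩
    · rw [enc_le_iff']; exact ⟨h0, Nat.zero_le _⟩
  · by_cases h1 : p ≤ d 1
    · refine ⟨enc (0, p), ?_, ?_⟩
      · simp only [GM, Finset.mem_image]
        exact ⟨(0,p), by simp [Finset.mem_filter, Finset.mem_product, Nat.mul_comm], rfl⟩
      · rw [enc_le_iff']; exact ⟨Nat.zero_le _, h1⟩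
    · refine ⟨enc (d 0, d 1), ?_, ?_⟩
      · simp only [GM, Finset.mem_image]
        refine ⟨(d 0, d 1), ?_, rfl⟩
        simp only [Finset.mem_filter, Finset.mem_product, Finset.mem_range]
        exact ⟨⟨by omega, by omega⟩, hd⟩
      · rw [← enc_surj]

lemma X_mul_eq_mon (a b : ℕ) : (X 0 ^ a * X 1 ^ b : R2) = monomial (enc (a,b)) 1 := by
  rw [X_pow_eq, X_pow_eq, monomial_mul_monomial, one_mul]; rfl

lemma wIdeal_eq (p q : ℕ) : wIdeal p q = Ideal.span (monOf {d | p*q ≤ w2 p q d}) := by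
  unfold wIdeal
  congr 1
  ext f
  constructor
  · rintro ⟨β, γ, hw, rfl⟩
    exact ⟨enc (β, γ), by simp [w2, hw], (X_mul_eq_mon β γ).symm⟩
  · rintro ⟨d, hd, rfl⟩
    exact ⟨d 0, d 1, hd, by rw [X_mul_eq_mon, ← enc_surj]⟩

lemma mem_wIdeal_of_support {p q : ℕ} {f : R2}
    (hf : ∀ d, coeff d f ≠ 0 → p*q ≤ w2 p q d) : f ∈ wIdeal p q := by
  rw [wIdeal_eq]
  have h1 : f ∈ Ideal.span (monOf ↑(GM p q)) :=
    mem_span_of_support (fun d hd => GM_cover (hf d hd))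
  refine Ideal.span_mono ?_ h1
  exact Set.image_mono (fun g hg => GM_w hg)

lemma support_of_mem_wIdeal {p q : ℕ} {f : R2} (hf : f ∈ wIdeal p q) :
    ∀ d, coeff d f ≠ 0 → p*q ≤ w2 p q d := by
  rw [wIdeal_eq] at hf
  refine support_of_mem_span (fun d hd e => ?_) hf
  have hd' : p * q ≤ w2 p q d := hd
  show p * q ≤ w2 p q (d + e)
  rw [w2_add]; omega

section Jsec
variable (p q A B C : ℕ)

def SJ : Set E2 := {d | (A ≤ d 0 ∧ B ≤ d 1) ∨ C ≤ d 1 ∨ p*q ≤ w2 p q d}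

lemma SJ_up : ∀ d ∈ SJ p q A B C, ∀ e : E2, d + e ∈ SJ p q A B C := by
  intro d hd e
  have h0 : (d + e) 0 = d 0 + e 0 := Finsupp.add_apply d e 0
  have h1 : (d + e) 1 = d 1 + e 1 := Finsupp.add_apply d e 1
  have hw := w2_add p q d e
  rcases hd with ⟨ha, hb⟩ | hc | hm
  · exact Or.inl ⟨by omega, by omega⟩
  · exact Or.inr (Or.inl (by omega))
  · have hm' : p * q ≤ w2 p q d := hm
    exact Or.inr (Or.inr (show p*q ≤ w2 p q (d+e) by omega))

lemma SJ_cover : ∀ d ∈ SJ p q A B C,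
    ∃ g, (g = enc (A, B) ∨ g = enc (0, C) ∨ g ∈ GM p q) ∧ g ≤ d := by
  rintro d (⟨ha, hb⟩ | hc | hm)
  · exact ⟨enc (A, B), Or.inl rfl, (enc_le_iff' _ _).mpr ⟨ha, hb⟩⟩
  · exact ⟨enc (0, C), Or.inr (Or.inl rfl), (enc_le_iff' _ _).mpr ⟨Nat.zero_le _, hc⟩⟩
  · obtain ⟨g, hg, hgd⟩ := GM_cover hm
    exact ⟨g, Or.inr (Or.inr hg), hgd⟩

def Jmon : Ideal R2 := Ideal.span {X 0 ^ A * X 1 ^ B, X 1 ^ C} ⊔ wIdeal p q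

lemma mon_mem_Jmon {d : E2} (hd : d ∈ SJ p q A B C) :
    (monomial d 1 : R2) ∈ Jmon p q A B C := by
  obtain ⟨g, hg, hgd⟩ := SJ_cover p q A B C d hd
  have key : (monomial d 1 : R2) = monomial g 1 * monomial (d - g) 1 := by
    rw [monomial_mul_monomial, one_mul, add_tsub_cancel_of_le hgd]
  rcases hg with rfl | rfl | hgm
  · rw [key]
    apply Ideal.mul_mem_right
    apply Ideal.mem_sup_left
    exact Ideal.subset_span (by rw [← X_mul_eq_mon]; left; rfl)
  · rw [key]
    apply Ideal.mul_mem_right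
    apply Ideal.mem_sup_left
    apply Ideal.subset_span
    have hx : (X 1 ^ C : R2) = monomial (enc (0,C)) 1 := by
      rw [← X_mul_eq_mon 0 C, pow_zero, one_mul]
    rw [← hx]
    exact Set.mem_insert_of_mem _ rfl
  · apply Ideal.mem_sup_right
    apply mem_wIdeal_of_support
    intro e he
    classical
    rw [coeff_monomial] at he
    by_cases h : e = d
    · subst h
      calc p * q ≤ w2 p q g := GM_w hgm
      _ ≤ w2 p q e := by
          have h0 : g 0 ≤ e 0 := Finsupp.le_def.mp hgd 0
          have h1 : g 1 ≤ e 1 := Finsupp.le_def.mp hgd 1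
          unfold w2
          exact Nat.add_le_add (Nat.mul_le_mul_left p h0) (Nat.mul_le_mul_left q h1)
    · simp [h] at he

end Jsec

section Jsec2
variable (p q A B C : ℕ)

lemma support_of_mem_Jmon {f : R2} (hf : f ∈ Jmon p q A B C) :
    ∀ d, coeff d f ≠ 0 → d ∈ SJ p q A B C := by
  have hJ : Jmon p q A B C ≤ Ideal.span (monOf (SJ p q A B C)) := by
    unfold Jmon
    apply sup_le
    · rw [Ideal.span_le]
      rintro s (rfl | hs)
      · exact Ideal.subset_span ⟨enc (A, B), Or.inl (by simp), (X_mul_eq_mon A B).symm⟩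
      · simp only [Set.mem_singleton_iff] at hs
        subst hs
        refine Ideal.subset_span ⟨enc (0, C), Or.inr (Or.inl (by simp)), ?_⟩
        show (monomial (enc (0,C))) 1 = X 1 ^ C
        rw [← X_mul_eq_mon 0 C, pow_zero, one_mul]
    · rw [wIdeal_eq, Ideal.span_le]
      rintro s ⟨d, hd, rfl⟩
      exact Ideal.subset_span ⟨d, Or.inr (Or.inr hd), rfl⟩
  exact support_of_mem_span (SJ_up p q A B C) (hJ hf)

lemma mem_Jmon_of_support {f : R2} (hf : ∀ d, coeff d f ≠ 0 → d ∈ SJ p q A B C) :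
    f ∈ Jmon p q A B C := by
  classical
  set GJ : Finset E2 := insert (enc (A,B)) (insert (enc (0,C)) (GM p q)) with hGJ
  have h1 : f ∈ Ideal.span (monOf ↑GJ) := by
    apply mem_span_of_support
    intro d hd
    obtain ⟨g, hg, hgd⟩ := SJ_cover p q A B C d (hf d hd)
    refine ⟨g, ?_, hgd⟩
    simp only [hGJ, Finset.mem_insert]
    tauto
  refine Ideal.span_le.mpr ?_ h1
  rintro s ⟨g, hg, rfl⟩
  simp only [hGJ, Finset.coe_insert, Set.mem_insert_iff, Finset.mem_coe] at hg
  apply mon_mem_Jmon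
  rcases hg with rfl | rfl | hgm
  · exact Or.inl (by simp)
  · exact Or.inr (Or.inl (by simp))
  · exact Or.inr (Or.inr (GM_w hgm))

end Jsec2

section Jsec3
variable (p q A B C : ℕ)

def TJ : Finset (ℕ × ℕ) :=
  (Finset.range q ×ˢ Finset.range p).filter
    (fun ij => p*ij.1+q*ij.2 < p*q ∧ ¬(A ≤ ij.1 ∧ B ≤ ij.2) ∧ ij.2 < C)

lemma mem_TJimage_iff (hp : 0 < p) (hq : 0 < q) (d : E2) :
    d ∈ (TJ p q A B C).image enc ↔ d ∉ SJ p q A B C := by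
  have himg : d ∈ (TJ p q A B C).image enc ↔ (d 0, d 1) ∈ TJ p q A B C := by
    constructor
    · rintro h
      rw [Finset.mem_image] at h
      obtain ⟨ij, hij, hd⟩ := h
      have : ij = (d 0, d 1) := by
        have := congrArg (fun f : E2 => (f 0, f 1)) hd
        simpa using this
      rwa [this] at hij
    · intro h
      rw [Finset.mem_image]
      exact ⟨(d 0, d 1), h, (enc_surj d).symm⟩
  rw [himg]
  simp only [TJ, Finset.mem_filter, Finset.mem_product, Finset.mem_range, SJ,
    Set.mem_setOf_eq, w2]
  rw [not_or, not_or]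
  constructor
  · rintro ⟨⟨h0, h1⟩, hw, hAB, hC⟩
    exact ⟨hAB, by omega, by omega⟩
  · rintro ⟨hAB, hC, hw⟩
    have hw' : p * d 0 + q * d 1 < p * q := by omega
    have h0 : d 0 < q := by
      have : p * d 0 < p * q := by omega
      exact Nat.lt_of_mul_lt_mul_left this
    have h1 : d 1 < p := by
      have : q * d 1 < q * p := by
        have hc : q * p = p * q := Nat.mul_comm q p
        omega
      exact Nat.lt_of_mul_lt_mul_left this
    exact ⟨⟨h0, h1⟩, hw', hAB, by omega⟩

lemma rank_Jmon (hp : 0 < p) (hq : 0 < q) :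
    Module.rank ℂ (R2 ⧸ Jmon p q A B C) = (TJ p q A B C).card := by
  rw [rank_quotient_eq_card (mem_TJimage_iff p q A B C hp hq)
    (fun f => ⟨support_of_mem_Jmon p q A B C, mem_Jmon_of_support p q A B C⟩),
    Finset.card_image_of_injective _ enc_inj]

end Jsec3

def lowFin (p q : ℕ) : Finset E2 :=
  ((Finset.range q ×ˢ Finset.range p).filter (fun ij => p*ij.1+q*ij.2 < p*q)).image enc

lemma mem_lowFin {p q : ℕ} (hp : 0 < p) (hq : 0 < q) (d : E2) :
    d ∈ lowFin p q ↔ w2 p q d < p*q := by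
  simp only [lowFin, Finset.mem_image, Finset.mem_filter, Finset.mem_product, Finset.mem_range]
  constructor
  · rintro ⟨ij, ⟨⟨h0, h1⟩, hw⟩, rfl⟩
    simpa [w2] using hw
  · intro hd
    refine ⟨(d 0, d 1), ⟨⟨?_, ?_⟩, ?_⟩, (enc_surj d).symm⟩
    · have : p * d 0 < p * q := by unfold w2 at hd; omega
      exact Nat.lt_of_mul_lt_mul_left this
    · have : q * d 1 < q * p := by
        have hc : q * p = p * q := Nat.mul_comm q p
        unfold w2 at hd; omega
      exact Nat.lt_of_mul_lt_mul_left this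
    · simpa [w2] using hd

lemma reduce_mem {p q : ℕ} (hp : 0 < p) (hq : 0 < q)
    (Pspan : Submodule ℂ R2) (J' : Ideal R2)
    (hJP : ∀ f ∈ J', f ∈ Pspan)
    (hW : wIdeal p q ≤ J')
    (f0 : R2) (hf0 : f0 ∈ J') (d₀ : E2)
    (hc : coeff d₀ f0 ≠ 0)
    (hlead : ∀ d, coeff d f0 ≠ 0 → d = d₀ ∨
      p * d₀ 0 + q * d₀ 1 < p * d 0 + q * d 1 ∨
      (p * d 0 + q * d 1 = p * d₀ 0 + q * d₀ 1 ∧ d 1 < d₀ 1))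
    (d : E2) (hd₀d : d₀ ≤ d) (hwd : w2 p q d < p*q)
    (IH : ∀ d' : E2, w2 p q d' < p*q →
      (p*q - w2 p q d') * (p+1) + d' 1 < (p*q - w2 p q d) * (p+1) + d 1 →
      (monomial d' 1 : R2) ∈ Pspan) :
    (monomial d 1 : R2) ∈ Pspan := by
  classical
  set e : E2 := d - d₀ with he
  have hed : e + d₀ = d := tsub_add_cancel_of_le hd₀d
  set c : ℂ := coeff d₀ f0 with hcdef
  set u : R2 := monomial e 1 * f0 with hu
  have huJ : u ∈ J' := Ideal.mul_mem_left _ _ hf0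
  have hcoeffu : ∀ d' : E2, coeff d' u = if e ≤ d' then coeff (d' - e) f0 else 0 := by
    intro d'
    rw [hu, coeff_monomial_mul]
    by_cases hle : e ≤ d'
    · rw [if_pos hle, if_pos hle, one_mul]
    · rw [if_neg hle, if_neg hle]
  have hud : coeff d u = c := by
    rw [hcoeffu]
    have h1 : e ≤ d := tsub_le_self
    rw [if_pos h1, he, tsub_tsub_cancel_of_le hd₀d]
  set tailLow : R2 := ∑ d' ∈ (lowFin p q).erase d, monomial d' (coeff d' u) with htl
  have hcoefftl : ∀ d'' : E2, coeff d'' tailLow =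
      if d'' ∈ (lowFin p q).erase d then coeff d'' u else 0 := by
    intro d''
    rw [htl, map_sum]
    by_cases hmem : d'' ∈ (lowFin p q).erase d
    · rw [if_pos hmem, Finset.sum_eq_single_of_mem d'' hmem]
      · rw [coeff_monomial_same]
      · intro d' _ hne
        rw [coeff_monomial, if_neg (Ne.symm hne)]
    · rw [if_neg hmem, Finset.sum_eq_zero]
      intro d' hd'
      rw [coeff_monomial, if_neg]
      intro hEq
      exact hmem (hEq ▸ hd')
  set tailHigh : R2 := u - monomial d c - tailLow with hth
  have hhigh : tailHigh ∈ wIdeal p q := by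
    apply mem_wIdeal_of_support
    intro d'' hne
    by_contra hlt
    push_neg at hlt
    have hmemLow : d'' ∈ lowFin p q := (mem_lowFin hp hq d'').mpr hlt
    rw [hth, map_sub, map_sub, hcoefftl, coeff_monomial] at hne
    by_cases hdd : d'' = d
    · subst hdd
      rw [if_pos rfl, if_neg (Finset.notMem_erase _ _), hud] at hne
      simp at hne
    · rw [if_neg hdd, if_pos (Finset.mem_erase.mpr ⟨hdd, hmemLow⟩)] at hne
      simp at hne
  have hlow : tailLow ∈ Pspan := by
    rw [htl]
    apply Submodule.sum_mem
    intro d' hd'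
    by_cases hz : coeff d' u = 0
    · rw [hz, map_zero]; exact Submodule.zero_mem _
    · have hmono : (monomial d' (coeff d' u) : R2) = coeff d' u • monomial d' 1 := by
        rw [← map_smul, smul_eq_mul, mul_one]
      rw [hmono]
      apply Submodule.smul_mem
      obtain ⟨hne, hmemLow⟩ := Finset.mem_erase.mp hd'
      have hwd' : w2 p q d' < p*q := (mem_lowFin hp hq d').mp hmemLow
      apply IH d' hwd'
      -- show μ d' < μ d
      rw [hcoeffu] at hz
      by_cases hle : e ≤ d'
      · rw [if_pos hle] at hz
        have hsplit : d' = e + (d' - e) := (tsub_add_cancel_of_le hle).symm.trans (add_comm _ _)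
        have hwsplit : w2 p q d' = w2 p q e + w2 p q (d' - e) := by
          conv_lhs => rw [hsplit]
          exact w2_add p q e (d' - e)
        have hwd_split : w2 p q d = w2 p q e + w2 p q d₀ := by
          conv_lhs => rw [← hed]
          exact w2_add p q e d₀
        have h1split : d' 1 = e 1 + (d' - e) 1 := by
          conv_lhs => rw [hsplit]; exact Finsupp.add_apply e (d' - e) 1
        have h1d : d 1 = e 1 + d₀ 1 := by
          conv_lhs => rw [← hed]; exact Finsupp.add_apply e d₀ 1
        rcases hlead (d' - e) hz with hEq | hlt2 | ⟨hEq2, hlt2⟩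
        · exfalso
          apply hne
          rw [hsplit, hEq, hed]
        · -- strictly bigger weight
          have hww : w2 p q d < w2 p q d' := by
            have : w2 p q d₀ < w2 p q (d' - e) := hlt2
            omega
          have hd'1 : d' 1 < p := by
            have h2 : q * d' 1 < q * p := by
              have hcm : q * p = p * q := Nat.mul_comm q p
              have : q * d' 1 ≤ w2 p q d' := by unfold w2; omega
              omega
            exact Nat.lt_of_mul_lt_mul_left h2
          calc (p*q - w2 p q d') * (p+1) + d' 1
              < (p*q - w2 p q d') * (p+1) + (p+1) := by omega
            _ = (p*q - w2 p q d' + 1) * (p+1) := by ring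
            _ ≤ (p*q - w2 p q d) * (p+1) := Nat.mul_le_mul_right _ (by omega)
            _ ≤ (p*q - w2 p q d) * (p+1) + d 1 := Nat.le_add_right _ _
        · -- equal weight, smaller y-exponent
          have hww : w2 p q d' = w2 p q d := by
            have : w2 p q (d' - e) = w2 p q d₀ := hEq2
            omega
          have h1lt : d' 1 < d 1 := by omega
          rw [hww]
          omega
      · rw [if_neg hle] at hz
        exact absurd rfl hz
  have hkey : (monomial d c : R2) = u - tailLow - tailHigh := by
    rw [hth]; ring
  have hmc : (monomial d c : R2) ∈ Pspan := by
    rw [hkey]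
    exact Submodule.sub_mem _ (Submodule.sub_mem _ (hJP u huJ) hlow) (hJP _ (hW hhigh))
  have hfinal : (monomial d 1 : R2) = c⁻¹ • monomial d c := by
    rw [← map_smul, smul_eq_mul, inv_mul_cancel₀ hc]
  rw [hfinal]
  exact Submodule.smul_mem _ _ hmc

lemma coeff_sum_mon (s : Finset E2) (φ : E2 → ℂ) (d : E2) :
    coeff d (∑ d' ∈ s, monomial d' (φ d') : R2) = if d ∈ s then φ d else 0 := by
  classical
  rw [map_sum]
  by_cases hmem : d ∈ s
  · rw [if_pos hmem, Finset.sum_eq_single_of_mem d hmem]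
    · rw [coeff_monomial_same]
    · intro d' _ hne
      rw [coeff_monomial, if_neg (Ne.symm hne)]
  · rw [if_neg hmem, Finset.sum_eq_zero]
    intro d' hd'
    rw [coeff_monomial, if_neg]
    intro hEq
    exact hmem (hEq ▸ hd')

lemma span_top (p q A B C : ℕ) (hp : 0 < p) (hq : 0 < q) (g h : R2)
    (hgc : coeff (enc (A,B)) g ≠ 0)
    (hgl : ∀ d, coeff d g ≠ 0 → d = enc (A,B) ∨
      p * (enc (A,B)) 0 + q * (enc (A,B)) 1 < p * d 0 + q * d 1 ∨
      (p * d 0 + q * d 1 = p * (enc (A,B)) 0 + q * (enc (A,B)) 1 ∧ d 1 < (enc (A,B)) 1))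
    (hhc : coeff (enc (0,C)) h ≠ 0)
    (hhl : ∀ d, coeff d h ≠ 0 → d = enc (0,C) ∨
      p * (enc (0,C)) 0 + q * (enc (0,C)) 1 < p * d 0 + q * d 1 ∨
      (p * d 0 + q * d 1 = p * (enc (0,C)) 0 + q * (enc (0,C)) 1 ∧ d 1 < (enc (0,C)) 1)) :
    Submodule.span ℂ (monOf ↑((TJ p q A B C).image enc)) ⊔
      (Ideal.span {g, h} ⊔ wIdeal p q).restrictScalars ℂ = ⊤ := by
  classical
  set J' : Ideal R2 := Ideal.span {g, h} ⊔ wIdeal p q with hJ'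
  set Pspan : Submodule ℂ R2 :=
    Submodule.span ℂ (monOf ↑((TJ p q A B C).image enc)) ⊔ J'.restrictScalars ℂ with hP
  have hJP : ∀ f ∈ J', f ∈ Pspan := by
    intro f hf
    exact Submodule.mem_sup_right hf
  have hWJ : wIdeal p q ≤ J' := le_sup_right
  have key : ∀ n : ℕ, ∀ d : E2, (p*q - w2 p q d) * (p+1) + d 1 < n →
      (monomial d 1 : R2) ∈ Pspan := by
    intro n
    induction n with
    | zero => intro d hd; omega
    | succ n IH =>
      intro d hd
      by_cases hw : p*q ≤ w2 p q d
      · apply hJP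
        apply hWJ
        apply mem_wIdeal_of_support
        intro e he
        rw [coeff_monomial] at he
        by_cases hEq : e = d
        · subst hEq; exact hw
        · simp [hEq] at he
      · push_neg at hw
        by_cases hS : d ∈ SJ p q A B C
        · have hIH : ∀ d' : E2, w2 p q d' < p*q →
              (p*q - w2 p q d') * (p+1) + d' 1 < (p*q - w2 p q d) * (p+1) + d 1 →
              (monomial d' 1 : R2) ∈ Pspan := by
            intro d' h1 h2
            exact IH d' (by omega)
          rcases hS with ⟨hA, hB⟩ | hC | hm
          · have hle : enc (A,B) ≤ d := (enc_le_iff' _ _).mpr ⟨hA, hB⟩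
            have hgJ : g ∈ J' := Ideal.mem_sup_left (Ideal.subset_span (by left; rfl))
            exact reduce_mem hp hq Pspan J' hJP hWJ g hgJ (enc (A,B)) hgc hgl d hle hw hIH
          · have hle : enc (0,C) ≤ d := (enc_le_iff' _ _).mpr ⟨Nat.zero_le _, hC⟩
            have hhJ : h ∈ J' := Ideal.mem_sup_left (Ideal.subset_span (by right; rfl))
            exact reduce_mem hp hq Pspan J' hJP hWJ h hhJ (enc (0,C)) hhc hhl d hle hw hIH
          · exact absurd hm (by omega)
        · apply Submodule.mem_sup_left
          apply Submodule.subset_span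
          refine ⟨d, ?_, rfl⟩
          rw [Finset.mem_coe, mem_TJimage_iff p q A B C hp hq]
          exact hS
  rw [eq_top_iff]
  intro f _
  set fLow : R2 := ∑ d ∈ lowFin p q, monomial d (coeff d f) with hfl
  have h1 : fLow ∈ Pspan := by
    rw [hfl]
    apply Submodule.sum_mem
    intro d _
    have hmono : (monomial d (coeff d f) : R2) = coeff d f • monomial d 1 := by
      rw [← map_smul, smul_eq_mul, mul_one]
    rw [hmono]
    exact Submodule.smul_mem _ _ (key ((p*q - w2 p q d) * (p+1) + d 1 + 1) d (by omega))
  have h2 : f - fLow ∈ Pspan := by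
    apply hJP
    apply hWJ
    apply mem_wIdeal_of_support
    intro e he
    by_contra hlt
    push_neg at hlt
    rw [map_sub, hfl, coeff_sum_mon, if_pos ((mem_lowFin hp hq e).mpr hlt)] at he
    simp at he
  have : f = fLow + (f - fLow) := by ring
  rw [this]
  exact Submodule.add_mem _ h1 h2

lemma rank_Jprime_le (p q A B C : ℕ) (hp : 0 < p) (hq : 0 < q) (g h : R2)
    (hgc : coeff (enc (A,B)) g ≠ 0)
    (hgl : ∀ d, coeff d g ≠ 0 → d = enc (A,B) ∨
      p * (enc (A,B)) 0 + q * (enc (A,B)) 1 < p * d 0 + q * d 1 ∨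
      (p * d 0 + q * d 1 = p * (enc (A,B)) 0 + q * (enc (A,B)) 1 ∧ d 1 < (enc (A,B)) 1))
    (hhc : coeff (enc (0,C)) h ≠ 0)
    (hhl : ∀ d, coeff d h ≠ 0 → d = enc (0,C) ∨
      p * (enc (0,C)) 0 + q * (enc (0,C)) 1 < p * d 0 + q * d 1 ∨
      (p * d 0 + q * d 1 = p * (enc (0,C)) 0 + q * (enc (0,C)) 1 ∧ d 1 < (enc (0,C)) 1)) :
    Module.rank ℂ (R2 ⧸ (Ideal.span {g, h} ⊔ wIdeal p q)) ≤
      ((TJ p q A B C).card : Cardinal) := by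
  have := span_top p q A B C hp hq g h hgc hgl hhc hhl
  have h2 := rank_quotient_le_card (Tf := (TJ p q A B C).image enc) this
  calc Module.rank ℂ (R2 ⧸ (Ideal.span {g, h} ⊔ wIdeal p q)) ≤
      (((TJ p q A B C).image enc).card : Cardinal) := h2
    _ ≤ ((TJ p q A B C).card : Cardinal) := by
        exact_mod_cast Nat.cast_le.mpr (Finset.card_image_le)

-- pure arithmetic: p*i + q*j < p*q ↔ i < q - q*j/p  (p > 0)
lemma key_iff (p q i j : ℕ) (hp : 0 < p) : p*i + q*j < p*q ↔ i < q - q*j/p := by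
  set a := q*j/p with ha
  have hmod : p * a + q*j % p = q*j := by rw [ha]; exact Nat.div_add_mod _ _
  have hr : q*j % p < p := Nat.mod_lt _ hp
  constructor
  · intro hlt
    by_contra hge
    push_neg at hge
    by_cases haq : a ≤ q
    · have h1 : p*(q - a) ≤ p*i := Nat.mul_le_mul_left p (by omega)
      have h2 : p*(q - a) + p*a = p*q := by rw [← Nat.mul_add]; congr 1; omega
      omega
    · have h1 : p*q ≤ p*a := Nat.mul_le_mul_left p (by omega)
      omega
  · intro hlt
    have h1 : p*i ≤ p*(q - a - 1) := Nat.mul_le_mul_left p (by omega)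
    have h2 : p*(q - a - 1) + p*(a + 1) = p*q := by rw [← Nat.mul_add]; congr 1; omega
    have h3 : p*(a+1) = p*a + p := by ring
    omega

lemma filter_lt_card (q c : ℕ) : ((Finset.range q).filter (fun i => i < c)).card = min c q := by
  have : (Finset.range q).filter (fun i => i < c) = Finset.range (min c q) := by
    ext x
    simp only [Finset.mem_filter, Finset.mem_range]
    omega
  rw [this, Finset.card_range]

section Count
variable (p q A B C : ℕ)

-- row counts of TJ
lemma TJ_card_rows (hp : 0 < p) (hq : 0 < q) (hC : C ≤ p) :
    (TJ p q A B C).card =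
      ∑ j ∈ Finset.range p,
        ((Finset.range q).filter
          (fun i => p*i+q*j < p*q ∧ ¬(A ≤ i ∧ B ≤ j) ∧ j < C)).card := by
  rw [Finset.card_eq_sum_card_fiberwise (f := Prod.snd) (t := Finset.range p)
    (fun x hx => by
      simp only [TJ, Finset.mem_filter, Finset.mem_product] at hx
      exact (Finset.mem_product.mp (Finset.mem_filter.mp (show x ∈ TJ p q A B C from hx)).1).2)]
  apply Finset.sum_congr rfl
  intro j _
  apply Finset.card_bij (fun ij _ => ij.1)
  · rintro ⟨i, j'⟩ hij
    simp only [Finset.mem_filter, TJ, Finset.mem_product, Finset.mem_range] at hij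
    obtain ⟨⟨⟨hiq, hjp⟩, hcond⟩, hj⟩ := hij
    subst hj
    simp only [Finset.mem_filter, Finset.mem_range]
    exact ⟨hiq, hcond⟩
  · rintro ⟨i1, j1⟩ h1 ⟨i2, j2⟩ h2 hEq
    simp only [Finset.mem_filter] at h1 h2
    ext
    · exact hEq
    · exact h1.2.trans h2.2.symm
  · intro i hi
    simp only [Finset.mem_filter, Finset.mem_range] at hi
    refine ⟨(i, j), ?_, rfl⟩
    simp only [Finset.mem_filter, TJ, Finset.mem_product, Finset.mem_range]
    have hjC : j < C := hi.2.2.2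
    exact ⟨⟨⟨hi.1, by omega⟩, hi.2⟩, trivial⟩

lemma row_eval (hp : 0 < p) (hq : 0 < q) (j : ℕ) :
    ((Finset.range q).filter
      (fun i => p*i+q*j < p*q ∧ ¬(A ≤ i ∧ B ≤ j) ∧ j < C)).card =
    if j < C then (if j < B then q - q*j/p else min A (q - q*j/p)) else 0 := by
  have hcq : q - q*j/p ≤ q := Nat.sub_le _ _
  by_cases hjC : j < C
  · rw [if_pos hjC]
    by_cases hjB : j < B
    · rw [if_pos hjB]
      have : ∀ i, (p*i+q*j < p*q ∧ ¬(A ≤ i ∧ B ≤ j) ∧ j < C) ↔ i < q - q*j/p := by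
        intro i
        rw [← key_iff p q i j hp]
        constructor
        · exact fun h => h.1
        · intro h; exact ⟨h, fun hab => by omega, hjC⟩
      rw [Finset.filter_congr (fun i _ => this i), filter_lt_card]
      omega
    · rw [if_neg hjB]
      have : ∀ i, (p*i+q*j < p*q ∧ ¬(A ≤ i ∧ B ≤ j) ∧ j < C) ↔ i < min (q - q*j/p) A := by
        intro i
        rw [lt_min_iff, ← key_iff p q i j hp]
        constructor
        · rintro ⟨h1, h2, h3⟩
          exact ⟨h1, by omega⟩
        · rintro ⟨h1, h2⟩
          exact ⟨h1, by omega, hjC⟩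
      rw [Finset.filter_congr (fun i _ => this i), filter_lt_card]
      omega
  · rw [if_neg hjC]
    rw [Finset.filter_congr (fun i _ => iff_of_false (by tauto) (not_false)), Finset.filter_false,
      Finset.card_empty]

end Count

lemma card_rows (s t : Finset ℕ) (P : ℕ × ℕ → Prop) [DecidablePred P] :
    ((s ×ˢ t).filter P).card = ∑ j ∈ t, (s.filter fun i => P (i, j)).card := by
  rw [Finset.card_eq_sum_card_fiberwise (f := Prod.snd) (t := t)
    (fun x hx => (Finset.mem_product.mp (Finset.mem_filter.mp hx).1).2)]
  refine Finset.sum_congr rfl fun j hj => ?_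
  apply Finset.card_bij (fun ij _ => ij.1)
  · rintro ⟨i, j'⟩ hij
    simp only [Finset.mem_filter, Finset.mem_product] at hij ⊢
    obtain ⟨⟨⟨hi, hj'⟩, hP⟩, hjeq⟩ := hij
    subst hjeq
    exact ⟨hi, hP⟩
  · rintro ⟨i1, j1⟩ h1 ⟨i2, j2⟩ h2 hEq
    simp only [Finset.mem_filter] at h1 h2
    ext
    · exact hEq
    · exact h1.2.trans h2.2.symm
  · intro i hi
    refine ⟨(i, j), ?_, rfl⟩
    simp only [Finset.mem_filter, Finset.mem_product] at hi ⊢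
    exact ⟨⟨⟨hi.1, hj⟩, hi.2⟩, trivial⟩

lemma card_cols (s t : Finset ℕ) (P : ℕ × ℕ → Prop) [DecidablePred P] :
    ((s ×ˢ t).filter P).card = ∑ i ∈ s, (t.filter fun j => P (i, j)).card := by
  rw [Finset.card_eq_sum_card_fiberwise (f := Prod.fst) (t := s)
    (fun x hx => (Finset.mem_product.mp (Finset.mem_filter.mp hx).1).1)]
  refine Finset.sum_congr rfl fun i hi => ?_
  apply Finset.card_bij (fun ij _ => ij.2)
  · rintro ⟨i', j⟩ hij
    simp only [Finset.mem_filter, Finset.mem_product] at hij ⊢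
    obtain ⟨⟨⟨hi', hj⟩, hP⟩, hieq⟩ := hij
    subst hieq
    exact ⟨hj, hP⟩
  · rintro ⟨i1, j1⟩ h1 ⟨i2, j2⟩ h2 hEq
    simp only [Finset.mem_filter] at h1 h2
    ext
    · exact h1.2.trans h2.2.symm
    · exact hEq
  · intro j hj
    refine ⟨(i, j), ?_, rfl⟩
    simp only [Finset.mem_filter, Finset.mem_product] at hj ⊢
    exact ⟨⟨⟨hi, hj.1⟩, hj.2⟩, trivial⟩

lemma sum_Ico_one {f : ℕ → ℕ} (hf : f 0 = 0) (A : ℕ) :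
    ∑ i ∈ Finset.range A, f i = ∑ i ∈ Finset.Ico 1 A, f i := by
  rcases Nat.eq_zero_or_pos A with rfl | hA
  · simp
  · rw [Finset.range_eq_Ico, ← Finset.sum_Ico_consecutive f (Nat.zero_le 1) hA]
    simp [hf]

section Count3
variable (p q A B C : ℕ)

def UU : Finset (ℕ × ℕ) :=
  (Finset.range q ×ˢ Finset.range p).filter
    (fun ij => ij.1 < A ∧ B ≤ ij.2 ∧ p*ij.1+q*ij.2 < p*q)

lemma UU_rows (hp : 0 < p) (hq : 0 < q) (hBp : B ≤ p) :
    (UU p q A B).card = ∑ j ∈ Finset.Ico B p, min A (q - q*j/p) := by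
  rw [UU, card_rows]
  have heval : ∀ j ∈ Finset.range p,
      ((Finset.range q).filter fun i => i < A ∧ B ≤ j ∧ p*i+q*j < p*q).card
      = if B ≤ j then min A (q - q*j/p) else 0 := by
    intro j _
    by_cases hBj : B ≤ j
    · rw [if_pos hBj]
      have : ∀ i, (i < A ∧ B ≤ j ∧ p*i+q*j < p*q) ↔ i < min A (q - q*j/p) := by
        intro i
        rw [lt_min_iff, ← key_iff p q i j hp]
        constructor
        · rintro ⟨h1, _, h3⟩; exact ⟨h1, h3⟩
        · rintro ⟨h1, h2⟩; exact ⟨h1, hBj, h2⟩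
      rw [Finset.filter_congr (fun i _ => this i), filter_lt_card]
      have : q - q*j/p ≤ q := Nat.sub_le _ _
      omega
    · rw [if_neg hBj]
      rw [Finset.filter_congr (fun i _ => iff_of_false (by tauto) (not_false)),
        Finset.filter_false, Finset.card_empty]
  rw [Finset.sum_congr rfl heval, ← Finset.sum_filter]
  refine Finset.sum_congr ?_ (fun _ _ => rfl)
  ext j
  simp only [Finset.mem_filter, Finset.mem_range, Finset.mem_Ico]
  omega

lemma UU_cols (hp : 0 < p) (hq : 0 < q) (hAq : A ≤ q) :
    (UU p q A B).card = ∑ i ∈ Finset.range A, (p - p*i/q - B) := by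
  rw [UU, card_cols]
  have heval : ∀ i ∈ Finset.range q,
      ((Finset.range p).filter fun j => i < A ∧ B ≤ j ∧ p*i+q*j < p*q).card
      = if i < A then p - p*i/q - B else 0 := by
    intro i _
    by_cases hiA : i < A
    · rw [if_pos hiA]
      have hpq : p * q = q * p := Nat.mul_comm p q
      have : ∀ j, (i < A ∧ B ≤ j ∧ p*i+q*j < p*q) ↔ (B ≤ j ∧ j < p - p*i/q) := by
        intro j
        have hk := key_iff q p j i hq
        constructor
        · rintro ⟨_, h2, h3⟩
          exact ⟨h2, hk.mp (by omega)⟩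
        · rintro ⟨h1, h2⟩
          have := hk.mpr h2
          exact ⟨hiA, h1, by omega⟩
      rw [Finset.filter_congr (fun j _ => this j)]
      have hsub : (Finset.range p).filter (fun j => B ≤ j ∧ j < p - p*i/q)
          = Finset.Ico B (p - p*i/q) := by
        ext x
        simp only [Finset.mem_filter, Finset.mem_range, Finset.mem_Ico]
        have : p - p*i/q ≤ p := Nat.sub_le _ _
        omega
      rw [hsub, Nat.card_Ico]
    · rw [if_neg hiA]
      rw [Finset.filter_congr (fun j _ => iff_of_false (by tauto) (not_false)),
        Finset.filter_false, Finset.card_empty]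
  rw [Finset.sum_congr rfl heval, ← Finset.sum_filter]
  refine Finset.sum_congr ?_ (fun _ _ => rfl)
  ext i
  simp only [Finset.mem_filter, Finset.mem_range]
  omega

lemma TJ_card_formula (hp : 0 < p) (hq : 0 < q)
    (h1 : A*p + B*q ≤ p*q) (h2 : B ≤ C) (h3 : C ≤ p) :
    (TJ p q A B C).card = A*p + B*q - A*B - (∑ i ∈ Finset.Ico 1 A, p*i/q)
      - (∑ i ∈ Finset.Ico 1 B, q*i/p) - (∑ i ∈ Finset.Ico C p, min A (q - q*i/p)) := by
  have hBp : B ≤ p := le_trans h2 h3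
  have hAq : A ≤ q := by
    have hc : p * q = q * p := Nat.mul_comm p q
    have : A * p ≤ q * p := by omega
    exact Nat.le_of_mul_le_mul_right this hp
  -- the TJ card as row sums
  have hS0 : (TJ p q A B C).card = ∑ j ∈ Finset.range p,
      (if j < C then (if j < B then q - q*j/p else min A (q - q*j/p)) else 0) := by
    rw [TJ_card_rows p q A B C hp hq h3]
    exact Finset.sum_congr rfl (fun j _ => row_eval p q A B C hp hq j)
  have hsplit : ∑ j ∈ Finset.range p,
      (if j < C then (if j < B then q - q*j/p else min A (q - q*j/p)) else 0)
      = (∑ j ∈ Finset.Ico 0 B, (q - q*j/p)) + (∑ j ∈ Finset.Ico B C, min A (q - q*j/p)) := by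
    rw [Finset.range_eq_Ico, ← Finset.sum_Ico_consecutive _ (Nat.zero_le C) h3,
      ← Finset.sum_Ico_consecutive _ (Nat.zero_le B) h2]
    have e1 : ∀ j ∈ Finset.Ico 0 B,
        (if j < C then (if j < B then q - q*j/p else min A (q - q*j/p)) else 0) = q - q*j/p := by
      intro j hj
      rw [Finset.mem_Ico] at hj
      rw [if_pos (by omega), if_pos (by omega)]
    have e2 : ∀ j ∈ Finset.Ico B C,
        (if j < C then (if j < B then q - q*j/p else min A (q - q*j/p)) else 0)
          = min A (q - q*j/p) := by
      intro j hj
      rw [Finset.mem_Ico] at hj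
      rw [if_pos (by omega), if_neg (by omega)]
    have e3 : ∀ j ∈ Finset.Ico C p,
        (if j < C then (if j < B then q - q*j/p else min A (q - q*j/p)) else 0) = 0 := by
      intro j hj
      rw [Finset.mem_Ico] at hj
      rw [if_neg (by omega)]
    rw [Finset.sum_congr rfl e1, Finset.sum_congr rfl e2, Finset.sum_congr rfl e3,
      Finset.sum_const_zero, add_zero]
  -- identity (‡)
  have hB1 : (∑ j ∈ Finset.Ico 0 B, (q - q*j/p)) + (∑ j ∈ Finset.Ico 0 B, q*j/p) = B*q := by
    rw [← Finset.sum_add_distrib]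
    have e : ∀ j ∈ Finset.Ico 0 B, (q - q*j/p) + q*j/p = q := by
      intro j hj
      rw [Finset.mem_Ico] at hj
      have hj1 : q*j ≤ q*p := Nat.mul_le_mul_left q (by omega)
      have hj2 : q*j/p ≤ q*p/p := Nat.div_le_div_right hj1
      rw [Nat.mul_div_cancel q hp] at hj2
      omega
    rw [Finset.sum_congr rfl e, Finset.sum_const, Nat.card_Ico, Nat.sub_zero, smul_eq_mul]
  -- identity (†)
  have hex : ∀ i, i < A → p*i/q + B < p := by
    intro i hiA
    have hc1 : (p - B) * q + B * q = p * q := by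
      rw [← Nat.add_mul]; congr 1; omega
    have hc2 : p*(i+1) ≤ p*A := Nat.mul_le_mul_left p (by omega)
    have hc2' : p*(i+1) = p*i + p := by ring
    have hc3 : p*A = A*p := Nat.mul_comm p A
    have hlt : p*i < (p - B) * q := by omega
    have := (Nat.div_lt_iff_lt_mul hq).mpr hlt
    omega
  have hU1 : (UU p q A B).card + (∑ i ∈ Finset.range A, p*i/q) + A*B = A*p := by
    rw [UU_cols p q A B hp hq hAq, ← Finset.sum_add_distrib]
    have e : ∀ i ∈ Finset.range A, (p - p*i/q - B) + p*i/q = p - B := by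
      intro i hi
      rw [Finset.mem_range] at hi
      have := hex i hi
      omega
    rw [Finset.sum_congr rfl e, Finset.sum_const, Finset.card_range, smul_eq_mul]
    have : A * (p - B) + A * B = A * p := by
      rw [← Nat.mul_add]; congr 1; omega
    omega
  have hU2 : (UU p q A B).card
      = (∑ j ∈ Finset.Ico B C, min A (q - q*j/p)) + (∑ j ∈ Finset.Ico C p, min A (q - q*j/p)) := by
    rw [UU_rows p q A B hp hq hBp, ← Finset.sum_Ico_consecutive _ h2 h3]
  -- convert range sums to Ico 1 sums
  have hr1 : (∑ i ∈ Finset.range A, p*i/q) = ∑ i ∈ Finset.Ico 1 A, p*i/q :=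
    sum_Ico_one (by simp) A
  have hr2 : (∑ j ∈ Finset.Ico 0 B, q*j/p) = ∑ i ∈ Finset.Ico 1 B, q*i/p := by
    rw [← Finset.range_eq_Ico]
    exact sum_Ico_one (by simp) B
  rw [hS0, hsplit]
  omega

lemma TJ_card_le_AC : (TJ p q A 0 C).card ≤ A * C := by
  have hsub : TJ p q A 0 C ⊆ Finset.range A ×ˢ Finset.range C := by
    rintro ⟨i, j⟩ hij
    simp only [TJ, Finset.mem_filter, Finset.mem_product, Finset.mem_range] at hij ⊢
    obtain ⟨⟨h1, h2⟩, h3, h4, h5⟩ := hij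
    exact ⟨by omega, h5⟩
  calc (TJ p q A 0 C).card ≤ (Finset.range A ×ˢ Finset.range C).card := Finset.card_le_card hsub
    _ = A * C := by rw [Finset.card_product, Finset.card_range, Finset.card_range]

end Count3

/-- Let `g, h ∈ R` with `L_{(p,q)}(g) = x^A y^B`, `L_{(p,q)}(h) = y^C`,
`M = ⟨x^β y^γ : βp + γq ≥ pq⟩`, `J' = ⟨g,h⟩ + M` and `J = ⟨x^A y^B, y^C⟩ + M`. Then
`dim_ℂ R/J' ≤ dim_ℂ R/J`; if `Ap + Bq ≤ pq` and `B ≤ C ≤ p`, then `dim_ℂ R/J` equals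
`Ap + Bq − AB − Σ_{i=1}^{A−1}⌊pi/q⌋ − Σ_{i=1}^{B−1}⌊qi/p⌋ − Σ_{i=C}^{p−1} min{A, ⌈q − qi/p⌉}`;
and if `B = 0`, then `dim_ℂ R/J ≤ A·C`. -/

theorem stmt17 (p q : ℕ) (hp : 0 < p) (hq : 0 < q) (A B C : ℕ) (g h : R2)
    (hg : IsLeadMon p q g (Finsupp.single 0 A + Finsupp.single 1 B))
    (hh : IsLeadMon p q h (Finsupp.single 1 C)) :
    edim (Ideal.span {g, h} ⊔ wIdeal p q) ≤
      edim (Ideal.span {X 0 ^ A * X 1 ^ B, X 1 ^ C} ⊔ wIdeal p q) ∧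
    (A * p + B * q ≤ p * q → B ≤ C → C ≤ p →
      edim (Ideal.span {X 0 ^ A * X 1 ^ B, X 1 ^ C} ⊔ wIdeal p q) =
        ((A * p + B * q - A * B - (∑ i ∈ Finset.Ico 1 A, p * i / q)
          - (∑ i ∈ Finset.Ico 1 B, q * i / p)
          - (∑ i ∈ Finset.Ico C p, min A (q - q * i / p)) : ℕ) : ℕ∞)) ∧
    (B = 0 →
      edim (Ideal.span {X 0 ^ A * X 1 ^ B, X 1 ^ C} ⊔ wIdeal p q) ≤ ((A * C : ℕ) : ℕ∞)) := by
  have henc : enc (0, C) = Finsupp.single 1 C := by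
    simp [enc]
  have hencAB : enc (A, B) = Finsupp.single 0 A + Finsupp.single 1 B := rfl
  obtain ⟨hgc, hgl⟩ := hg
  obtain ⟨hhc, hhl⟩ := hh
  rw [← henc] at hhc hhl
  rw [← hencAB] at hgc hgl
  have hJmon : Jmon p q A B C = Ideal.span {X 0 ^ A * X 1 ^ B, X 1 ^ C} ⊔ wIdeal p q := rfl
  have hrankJ : Module.rank ℂ
      (R2 ⧸ (Ideal.span {X 0 ^ A * X 1 ^ B, X 1 ^ C} ⊔ wIdeal p q))
      = ((TJ p q A B C).card : Cardinal) := by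
    rw [← hJmon]
    exact rank_Jmon p q A B C hp hq
  have hedimJ : edim (Ideal.span {X 0 ^ A * X 1 ^ B, X 1 ^ C} ⊔ wIdeal p q)
      = (((TJ p q A B C).card : ℕ) : ℕ∞) := by
    unfold edim
    rw [hrankJ]
    exact Cardinal.toENat_nat _
  refine ⟨?_, ?_, ?_⟩
  · rw [hedimJ]
    have hle := rank_Jprime_le p q A B C hp hq g h hgc hgl hhc hhl
    unfold edim
    exact Cardinal.toENat_le_nat.mpr hle
  · intro h1 h2 h3
    rw [hedimJ]
    exact_mod_cast congrArg (Nat.cast : ℕ → ℕ∞) (TJ_card_formula p q A B C hp hq h1 h2 h3)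
  · intro hB0
    subst hB0
    rw [hedimJ]
    exact_mod_cast (Nat.cast_le (α := ℕ∞)).mpr (TJ_card_le_AC p q A C)

end
end
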